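/- arXiv:2502.00119 — 8 statements merged into one kernel-verified Lean document; each statement's English description precedes it below -/
import Mathlib

section
/- Let H be a real Hilbert space, F : H → H monotone and L-Lipschitz with L > 0, and γ ∈ (0, 1/L). Let z ∈ H, z̄ ∈ H, z⁺ ∈ H be arbitrary points and define V(z, z̄, z⁺) = (2/γ)⟨z - z⁺, F z - F z̄⟩ + (1/γ²)‖z⁺ - z̄‖² + (1/γ²)‖z - z⁺‖². Then V(z, z̄, z⁺) ≥ ((1 - γL)/γ²)(‖z⁺ - z̄‖² + ‖z⁺ - z‖²) ≥ 0. -/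
open scoped RealInnerProductSpace

noncomputable def lyapV {H : Type*} [NormedAddCommGroup H] [InnerProductSpace ℝ H]
    (F : H → H) (γ : ℝ) (z zb zp : H) : ℝ :=
  (2 / γ) * ⟪z - zp, F z - F zb⟫ + (1 / γ ^ 2) * ‖zp - zb‖ ^ 2 + (1 / γ ^ 2) * ‖z - zp‖ ^ 2

theorem stmt0 {H : Type*} [NormedAddCommGroup H] [InnerProductSpace ℝ H] [CompleteSpace H]
    (F : H → H) (L γ : ℝ) (hL : 0 < L)
    (hmono : ∀ x y : H, 0 ≤ ⟪F x - F y, x - y⟫)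
    (hlip : ∀ x y : H, ‖F x - F y‖ ≤ L * ‖x - y‖)
    (hγ0 : 0 < γ) (hγ1 : γ < 1 / L) (z zb zp : H) :
    ((1 - γ * L) / γ ^ 2) * (‖zp - zb‖ ^ 2 + ‖zp - z‖ ^ 2) ≤ lyapV F γ z zb zp ∧
      0 ≤ ((1 - γ * L) / γ ^ 2) * (‖zp - zb‖ ^ 2 + ‖zp - z‖ ^ 2) := by
  have hγL : γ * L < 1 := (lt_div_iff₀ hL).mp hγ1
  have hnz : ‖zp - z‖ = ‖z - zp‖ := norm_sub_rev _ _
  have hsplit : ⟪z - zp, F z - F zb⟫ =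
      ⟪z - zp, F z - F zp⟫ + ⟪z - zp, F zp - F zb⟫ := by
    rw [← inner_add_right]; congr 1; abel
  have h1 : (0:ℝ) ≤ ⟪z - zp, F z - F zp⟫ := by
    rw [real_inner_comm]; exact hmono z zp
  have h2 : -(‖z - zp‖ * ‖F zp - F zb‖) ≤ ⟪z - zp, F zp - F zb⟫ :=
    neg_le_of_abs_le (abs_real_inner_le_norm _ _)
  have h3 := hlip zp zb
  have hkey : -(L / 2) * (‖zp - zb‖ ^ 2 + ‖z - zp‖ ^ 2) ≤ ⟪z - zp, F z - F zb⟫ := by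
    rw [hsplit]
    have h4 : ‖z - zp‖ * ‖F zp - F zb‖ ≤ ‖z - zp‖ * (L * ‖zp - zb‖) :=
      mul_le_mul_of_nonneg_left h3 (norm_nonneg _)
    nlinarith [sq_nonneg (‖z - zp‖ - ‖zp - zb‖)]
  constructor
  · unfold lyapV
    rw [hnz]
    have h5 : (2 / γ) * (-(L / 2) * (‖zp - zb‖ ^ 2 + ‖z - zp‖ ^ 2)) ≤
        (2 / γ) * ⟪z - zp, F z - F zb⟫ :=
      mul_le_mul_of_nonneg_left hkey (by positivity)
    have heq : ((1 - γ * L) / γ ^ 2) * (‖zp - zb‖ ^ 2 + ‖z - zp‖ ^ 2) =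
        (2 / γ) * (-(L / 2) * (‖zp - zb‖ ^ 2 + ‖z - zp‖ ^ 2)) +
          (1 / γ ^ 2) * ‖zp - zb‖ ^ 2 + (1 / γ ^ 2) * ‖z - zp‖ ^ 2 := by
      field_simp
      ring
    linarith
  · have h6 : (0:ℝ) ≤ (1 - γ * L) / γ ^ 2 :=
      div_nonneg (by linarith) (by positivity)
    have h7 : (0:ℝ) ≤ ‖zp - zb‖ ^ 2 + ‖zp - z‖ ^ 2 := by positivity
    exact mul_nonneg h6 h7
end

section
/- Let F : H → H be monotone and L-Lipschitz on a real Hilbert space H, γ > 0, and consider the extragradient iteration z̄ᵏ = zᵏ - γ F(zᵏ), zᵏ⁺¹ = zᵏ - γ F(z̄ᵏ). Then for each k, ‖F(zᵏ⁺¹)‖² ≤ ‖F(zᵏ)‖² - (1 - γ²L²)‖F(zᵏ) - F(z̄ᵏ)‖². -/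
open scoped RealInnerProductSpace

theorem stmt1 {H : Type*} [NormedAddCommGroup H] [InnerProductSpace ℝ H] [CompleteSpace H]
    (F : H → H) (L γ : ℝ) (hL : 0 < L)
    (hmono : ∀ x y : H, 0 ≤ ⟪F x - F y, x - y⟫)
    (hlip : ∀ x y : H, ‖F x - F y‖ ≤ L * ‖x - y‖)
    (hγ : 0 < γ) (z zb : ℕ → H)
    (hzb : ∀ k, zb k = z k - γ • F (z k))
    (hz : ∀ k, z (k + 1) = z k - γ • F (zb k)) :
    ∀ k : ℕ,
      ‖F (z (k + 1))‖ ^ 2 ≤ ‖F (z k)‖ ^ 2 - (1 - γ ^ 2 * L ^ 2) * ‖F (z k) - F (zb k)‖ ^ 2 := by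
  intro k
  set a := F (z (k + 1)) with ha
  set b := F (z k) with hb
  set c := F (zb k) with hc
  -- z(k+1) - z k = -γ • c
  have hstep : z (k + 1) - z k = -(γ • c) := by
    rw [hz k]; abel
  -- monotonicity: ⟪a - b, c⟫ ≤ 0
  have hmon : ⟪a - b, c⟫ ≤ 0 := by
    have h0 := hmono (z (k + 1)) (z k)
    rw [hstep] at h0
    rw [inner_neg_right, real_inner_smul_right] at h0
    nlinarith
  -- z(k+1) - zb k = γ • (b - c)
  have hzb' : zb k = z k - γ • b := hzb k
  have hdiff : z (k + 1) - zb k = γ • (b - c) := by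
    rw [hz k, ← hc, hzb', smul_sub]; abel
  -- lipschitz: ‖a - c‖ ≤ γ * L * ‖b - c‖
  have hlipk : ‖a - c‖ ≤ γ * L * ‖b - c‖ := by
    have h0 := hlip (z (k + 1)) (zb k)
    rw [hdiff, norm_smul, Real.norm_eq_abs, abs_of_pos hγ] at h0
    calc ‖a - c‖ ≤ L * (γ * ‖b - c‖) := h0
    _ = γ * L * ‖b - c‖ := by ring
  have hsq : ‖a - c‖ ^ 2 ≤ γ ^ 2 * L ^ 2 * ‖b - c‖ ^ 2 := by
    nlinarith [norm_nonneg (a - c), norm_nonneg (b - c), hγ.le, hL.le,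
      mul_nonneg (mul_nonneg hγ.le hL.le) (norm_nonneg (b - c))]
  -- norm identity
  have id1 : ‖a - c‖ ^ 2 = ‖a‖ ^ 2 - 2 * ⟪a, c⟫ + ‖c‖ ^ 2 := norm_sub_sq_real a c
  have id2 : ‖b - c‖ ^ 2 = ‖b‖ ^ 2 - 2 * ⟪b, c⟫ + ‖c‖ ^ 2 := norm_sub_sq_real b c
  have id3 : ⟪a - b, c⟫ = ⟪a, c⟫ - ⟪b, c⟫ := inner_sub_left a b c
  nlinarith [hsq, id1, id2, id3, hmon]
end

section
/- Let F : H → H be monotone and L-Lipschitz on a real Hilbert space, γ ∈ (0, 1/L), z⋆ ∈ H with F(z⋆) = 0, and consider the extragradient iteration z̄ᵏ = zᵏ - γ F(zᵏ), zᵏ⁺¹ = zᵏ - γ F(z̄ᵏ). Then for each k ∈ ℕ, ‖F(zᵏ)‖² ≤ ‖z⁰ - z⋆‖² / (γ²(1 - γ²L²)(k + 1)). -/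
open scoped RealInnerProductSpace

theorem stmt2 {H : Type*} [NormedAddCommGroup H] [InnerProductSpace ℝ H] [CompleteSpace H]
    (F : H → H) (L γ : ℝ) (hL : 0 < L)
    (hmono : ∀ x y : H, 0 ≤ ⟪F x - F y, x - y⟫)
    (hlip : ∀ x y : H, ‖F x - F y‖ ≤ L * ‖x - y‖)
    (hγ0 : 0 < γ) (hγ1 : γ < 1 / L)
    (zstar : H) (hzstar : F zstar = 0)
    (z zb : ℕ → H)
    (hzb : ∀ k, zb k = z k - γ • F (z k))
    (hz : ∀ k, z (k + 1) = z k - γ • F (zb k)) :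
    ∀ k : ℕ,
      ‖F (z k)‖ ^ 2 ≤ ‖z 0 - zstar‖ ^ 2 / (γ ^ 2 * (1 - γ ^ 2 * L ^ 2) * (k + 1)) := by
  have hγL : γ * L < 1 := by
    rw [lt_div_iff₀ hL] at hγ1; linarith
  have ht : 0 < 1 - γ ^ 2 * L ^ 2 := by
    nlinarith [mul_pos (mul_pos hγ0 hL) (sub_pos.mpr hγL), sub_pos.mpr hγL]
  -- Descent lemma
  have hA : ∀ j, ‖z (j + 1) - zstar‖ ^ 2 ≤
      ‖z j - zstar‖ ^ 2 - γ ^ 2 * (1 - γ ^ 2 * L ^ 2) * ‖F (z j)‖ ^ 2 := by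
    intro j
    set a := F (z j) with ha
    set b := F (zb j) with hb
    set u := z j - zstar with hu
    have h1 : z (j + 1) - zstar = u - γ • b := by rw [hz, ← hb, hu]; abel
    have h2 : zb j - zstar = u - γ • a := by rw [hzb, ← ha, hu]; abel
    have hmon : 0 ≤ ⟪b, u⟫ - γ * ⟪b, a⟫ := by
      have h := hmono (zb j) zstar
      rw [hzstar, sub_zero, ← hb, h2, inner_sub_right, real_inner_smul_right] at h
      linarith
    have hlipj : ‖b - a‖ ≤ L * (γ * ‖a‖) := by
      have h := hlip (zb j) (z j)
      have h3 : zb j - z j = -(γ • a) := by rw [hzb, ← ha]; abel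
      rwa [← hb, ← ha, h3, norm_neg, norm_smul, Real.norm_eq_abs, abs_of_pos hγ0] at h
    have hlip2 : ‖b - a‖ ^ 2 ≤ L ^ 2 * γ ^ 2 * ‖a‖ ^ 2 := by
      nlinarith [norm_nonneg (b - a), norm_nonneg a, mul_pos hL hγ0,
        mul_nonneg (mul_pos hL hγ0).le (norm_nonneg a)]
    have e1 : ‖u - γ • b‖ ^ 2 = ‖u‖ ^ 2 - 2 * (γ * ⟪u, b⟫) + γ ^ 2 * ‖b‖ ^ 2 := by
      rw [norm_sub_sq_real, real_inner_smul_right, norm_smul, Real.norm_eq_abs,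
        abs_of_pos hγ0, mul_pow]
    have e2 : ‖b - a‖ ^ 2 = ‖b‖ ^ 2 - 2 * ⟪b, a⟫ + ‖a‖ ^ 2 := norm_sub_sq_real b a
    have hsym : ⟪u, b⟫ = ⟪b, u⟫ := real_inner_comm b u
    have hmon2 : 2 * γ * (γ * ⟪b, a⟫) ≤ 2 * γ * ⟪b, u⟫ :=
      mul_le_mul_of_nonneg_left (by linarith) (by linarith)
    have hlip2' : γ ^ 2 * (‖b‖ ^ 2 - 2 * ⟪b, a⟫ + ‖a‖ ^ 2) ≤
        γ ^ 2 * (L ^ 2 * γ ^ 2 * ‖a‖ ^ 2) := by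
      rw [← e2]
      exact mul_le_mul_of_nonneg_left hlip2 (sq_nonneg γ)
    rw [h1, e1, hsym]
    nlinarith [hmon2, hlip2']
  -- Norm monotonicity lemma
  have hB : ∀ j, ‖F (z (j + 1))‖ ^ 2 ≤ ‖F (z j)‖ ^ 2 := by
    intro j
    set a := F (z j) with ha
    set b := F (zb j) with hb
    set c := F (z (j + 1)) with hc
    have hd1 : z (j + 1) - z j = -(γ • b) := by rw [hz, ← hb]; abel
    have hd2 : z (j + 1) - zb j = γ • (a - b) := by
      rw [hz, ← hb, hzb, ← ha, smul_sub]; abel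
    have hM3 : ⟪c, b⟫ ≤ ⟪a, b⟫ := by
      have h := hmono (z (j + 1)) (z j)
      rw [← hc, ← ha, hd1, inner_neg_right, real_inner_smul_right, inner_sub_left] at h
      nlinarith [hγ0, h]
    have hL1 : ‖c - b‖ ≤ L * (γ * ‖a - b‖) := by
      have h := hlip (z (j + 1)) (zb j)
      rwa [← hc, ← hb, hd2, norm_smul, Real.norm_eq_abs, abs_of_pos hγ0] at h
    have hL1' : ‖c - b‖ ^ 2 ≤ γ ^ 2 * L ^ 2 * ‖a - b‖ ^ 2 := by
      nlinarith [norm_nonneg (c - b), norm_nonneg (a - b),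
        mul_nonneg (mul_pos hL hγ0).le (norm_nonneg (a - b))]
    have e1 : ‖c - b‖ ^ 2 = ‖c‖ ^ 2 - 2 * ⟪c, b⟫ + ‖b‖ ^ 2 := norm_sub_sq_real c b
    have e2 : ‖a - b‖ ^ 2 = ‖a‖ ^ 2 - 2 * ⟪a, b⟫ + ‖b‖ ^ 2 := norm_sub_sq_real a b
    have key : 0 ≤ (1 - γ ^ 2 * L ^ 2) * (‖a‖ ^ 2 - 2 * ⟪a, b⟫ + ‖b‖ ^ 2) := by
      rw [← e2]
      exact mul_nonneg ht.le (sq_nonneg _)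
    rw [e1, e2] at hL1'
    nlinarith [hL1', key, hM3]
  -- Telescoping by induction
  set cst := γ ^ 2 * (1 - γ ^ 2 * L ^ 2) with hcst
  have hcpos : 0 < cst := by positivity
  have hI : ∀ j : ℕ, ((j : ℝ) + 1) * cst * ‖F (z j)‖ ^ 2 + ‖z (j + 1) - zstar‖ ^ 2 ≤
      ‖z 0 - zstar‖ ^ 2 := by
    intro j
    induction j with
    | zero =>
      have := hA 0
      push_cast
      linarith
    | succ n ih =>
      have h1 := hA (n + 1)
      have h2 := hB n
      have h0 : (0:ℝ) ≤ ((n : ℝ) + 1) * cst := by positivity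
      have h3 : ((n : ℝ) + 1) * cst * ‖F (z (n + 1))‖ ^ 2 ≤
          ((n : ℝ) + 1) * cst * ‖F (z n)‖ ^ 2 := mul_le_mul_of_nonneg_left h2 h0
      push_cast at ih ⊢
      linarith
  intro k
  have hk := hI k
  rw [le_div_iff₀ (show (0:ℝ) < cst * ((k : ℝ) + 1) by positivity)]
  nlinarith [hk, sq_nonneg ‖z (k + 1) - zstar‖]
end

section
/- Let F : H → H be monotone and L-Lipschitz on a real Hilbert space, γ ∈ (0, 1/L), and suppose F has a zero. If (zᵏ) are extragradient iterates z̄ᵏ = zᵏ - γ F(zᵏ), zᵏ⁺¹ = zᵏ - γ F(z̄ᵏ), then k‖F(zᵏ)‖² → 0 as k → ∞ (i.e., ‖F(zᵏ)‖² ∈ o(1/k)). -/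
open scoped RealInnerProductSpace

lemma key_dec {H : Type*} [NormedAddCommGroup H] [InnerProductSpace ℝ H]
    (a u v : H) (h3 : 0 ≤ ⟪u + v, a - u⟫) (h4 : ‖v‖ ≤ ‖u‖) :
    ‖a - u - v‖ ^ 2 ≤ ‖a‖ ^ 2 := by
  have e1 : ‖a - u - v‖ ^ 2 = ‖a‖ ^ 2 - 2 * ⟪a, u + v⟫ + ‖u + v‖ ^ 2 := by
    rw [sub_sub]; exact norm_sub_sq_real a (u + v)
  have e2 : ‖u + v‖ ^ 2 = ‖u‖ ^ 2 + 2 * ⟪u, v⟫ + ‖v‖ ^ 2 := norm_add_sq_real u v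
  have e3 : ⟪u + v, a - u⟫ = ⟪a, u + v⟫ - ‖u‖ ^ 2 - ⟪u, v⟫ := by
    simp only [inner_sub_right, inner_add_left, inner_add_right, real_inner_self_eq_norm_sq]
    rw [real_inner_comm u a, real_inner_comm v a, real_inner_comm v u]
    ring
  have h4' : ‖v‖ ^ 2 ≤ ‖u‖ ^ 2 := by
    have := norm_nonneg v
    nlinarith
  nlinarith [e1, e2, e3, h3, h4']

lemma olivier {b : ℕ → ℝ} (hnn : ∀ k, 0 ≤ b k) (hanti : Antitone b)
    (hsum : Summable b) :
    Filter.Tendsto (fun k : ℕ => (k : ℝ) * b k) Filter.atTop (nhds 0) := by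
  rw [Metric.tendsto_atTop]
  intro ε hε
  obtain ⟨S, hS⟩ := hsum
  have hps := hS.tendsto_sum_nat
  rw [Metric.tendsto_atTop] at hps
  obtain ⟨N, hN⟩ := hps (ε / 4) (by linarith)
  refine ⟨2 * N + 1, fun k hk => ?_⟩
  have hkN : N ≤ k := by omega
  have hsum_tail : ∑ j ∈ Finset.Ico N k, b j < ε / 2 := by
    have h1 := hN k hkN
    have h2 := hN N le_rfl
    rw [Real.dist_eq] at h1 h2
    have heq : ∑ j ∈ Finset.Ico N k, b j
        = (∑ j ∈ Finset.range k, b j) - ∑ j ∈ Finset.range N, b j := by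
      rw [Finset.sum_Ico_eq_sub _ hkN]
    rw [heq]
    have := abs_lt.mp h1
    have := abs_lt.mp h2
    linarith [(abs_lt.mp h1).1, (abs_lt.mp h1).2, (abs_lt.mp h2).1, (abs_lt.mp h2).2]
  have hcard : ((k - N : ℕ) : ℝ) * b k ≤ ∑ j ∈ Finset.Ico N k, b j := by
    have hle : ∀ j ∈ Finset.Ico N k, b k ≤ b j := fun j hj =>
      hanti (Finset.mem_Ico.mp hj).2.le
    calc ((k - N : ℕ) : ℝ) * b k = (Finset.Ico N k).card • b k := by
          rw [Nat.card_Ico, nsmul_eq_mul]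
      _ ≤ ∑ j ∈ Finset.Ico N k, b j := Finset.card_nsmul_le_sum _ _ _ hle
  have hbnn := hnn k
  have hhalf : (N : ℝ) * b k ≤ ((k - N : ℕ) : ℝ) * b k := by
    apply mul_le_mul_of_nonneg_right _ hbnn
    have : N ≤ k - N := by omega
    exact_mod_cast this
  have hcast : ((k - N : ℕ) : ℝ) = (k : ℝ) - N := by
    push_cast [Nat.cast_sub hkN]; ring
  rw [Real.dist_eq, sub_zero, abs_of_nonneg (mul_nonneg (Nat.cast_nonneg k) hbnn)]
  have hsplit : (k : ℝ) * b k = ((k - N : ℕ) : ℝ) * b k + (N : ℝ) * b k := by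
    rw [hcast]; ring
  linarith

theorem stmt3 {H : Type*} [NormedAddCommGroup H] [InnerProductSpace ℝ H] [CompleteSpace H]
    (F : H → H) (L γ : ℝ) (hL : 0 < L)
    (hmono : ∀ x y : H, 0 ≤ ⟪F x - F y, x - y⟫)
    (hlip : ∀ x y : H, ‖F x - F y‖ ≤ L * ‖x - y‖)
    (hγ0 : 0 < γ) (hγ1 : γ < 1 / L)
    (hzer : ∃ zstar : H, F zstar = 0)
    (z zb : ℕ → H)
    (hzb : ∀ k, zb k = z k - γ • F (z k))
    (hz : ∀ k, z (k + 1) = z k - γ • F (zb k)) :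
    Filter.Tendsto (fun k : ℕ => (k : ℝ) * ‖F (z k)‖ ^ 2) Filter.atTop (nhds 0) := by
  obtain ⟨zs, hzs⟩ := hzer
  set b : ℕ → ℝ := fun k => ‖F (z k)‖ ^ 2 with hb
  have hγL : γ * L < 1 := (lt_div_iff₀ hL).mp hγ1
  have hγL0 : 0 < γ * L := mul_pos hγ0 hL
  -- Step 1: antitone
  have hdec : ∀ k, b (k + 1) ≤ b k := by
    intro k
    set a := F (z k)
    set bb := F (zb k)
    set c := F (z (k + 1))
    have hc_eq : c = a - (a - bb) - (bb - c) := by abel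
    have h3 : 0 ≤ ⟪(a - bb) + (bb - c), a - (a - bb)⟫ := by
      have huv : (a - bb) + (bb - c) = a - c := by abel
      have hau : a - (a - bb) = bb := by abel
      rw [huv, hau]
      have hm := hmono (z k) (z (k + 1))
      have hd : z k - z (k + 1) = γ • bb := by rw [hz k]; abel
      rw [hd, real_inner_smul_right] at hm
      nlinarith
    have h4 : ‖bb - c‖ ≤ ‖a - bb‖ := by
      have hl := hlip (zb k) (z (k + 1))
      have hd : zb k - z (k + 1) = -(γ • (a - bb)) := by
        rw [hzb k, hz k, smul_sub]; abel
      rw [hd, norm_neg, norm_smul, Real.norm_eq_abs, abs_of_pos hγ0] at hl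
      have hnn : (0:ℝ) ≤ ‖a - bb‖ := norm_nonneg _
      nlinarith
    calc b (k + 1) = ‖a - (a - bb) - (bb - c)‖ ^ 2 := by rw [hb]; simp only; rw [← hc_eq]
      _ ≤ ‖a‖ ^ 2 := key_dec a (a - bb) (bb - c) h3 h4
      _ = b k := rfl
  have hanti : Antitone b := antitone_nat_of_succ_le hdec
  have hnn : ∀ k, 0 ≤ b k := fun k => sq_nonneg _
  -- Step 2: Fejér decrease
  set C : ℝ := γ ^ 2 * (1 - (γ * L) ^ 2) with hC
  have hCpos : 0 < C := by
    apply mul_pos (by positivity)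
    nlinarith
  set g : ℕ → ℝ := fun k => ‖z k - zs‖ ^ 2 with hg
  have hfejer : ∀ k, C * b k ≤ g k - g (k + 1) := by
    intro k
    have A : ‖z (k + 1) - zs‖ ^ 2
        = ‖zb k - zs‖ ^ 2 + 2 * ⟪zb k - zs, z (k + 1) - zb k⟫ + ‖z (k + 1) - zb k‖ ^ 2 := by
      have := norm_add_sq_real (zb k - zs) (z (k + 1) - zb k)
      rwa [sub_add_sub_cancel'] at this
    have B : ‖z k - zs‖ ^ 2
        = ‖zb k - zs‖ ^ 2 + 2 * ⟪zb k - zs, z k - zb k⟫ + ‖z k - zb k‖ ^ 2 := by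
      have := norm_add_sq_real (zb k - zs) (z k - zb k)
      rwa [sub_add_sub_cancel'] at this
    have hinner : ⟪zb k - zs, z (k + 1) - zb k⟫ - ⟪zb k - zs, z k - zb k⟫
        = -(γ * ⟪F (zb k) - F zs, zb k - zs⟫) := by
      rw [← inner_sub_right]
      have hd : z (k + 1) - zb k - (z k - zb k) = -(γ • F (zb k)) := by
        rw [hz k]; abel
      rw [hd, inner_neg_right, real_inner_smul_right, hzs, sub_zero, real_inner_comm]
    have hm := hmono (zb k) zs
    have hd1 : z k - zb k = γ • F (z k) := by rw [hzb k]; abel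
    have hd2 : z (k + 1) - zb k = -(γ • (F (zb k) - F (z k))) := by
      rw [hz k, hzb k, smul_sub]; abel
    have hn1 : ‖z k - zb k‖ = γ * ‖F (z k)‖ := by
      rw [hd1, norm_smul, Real.norm_eq_abs, abs_of_pos hγ0]
    have hn2 : ‖z (k + 1) - zb k‖ ≤ γ * (L * (γ * ‖F (z k)‖)) := by
      rw [hd2, norm_neg, norm_smul, Real.norm_eq_abs, abs_of_pos hγ0]
      have hl2 := hlip (zb k) (z k)
      have hzz : ‖zb k - z k‖ = γ * ‖F (z k)‖ := by
        rw [← norm_neg, neg_sub, hn1]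
      rw [hzz] at hl2
      nlinarith
    have hsq : ‖z (k + 1) - zb k‖ ^ 2 ≤ (γ * (L * (γ * ‖F (z k)‖))) ^ 2 :=
      pow_le_pow_left₀ (norm_nonneg _) hn2 2
    have hgM : 0 ≤ γ * ⟪F (zb k) - F zs, zb k - zs⟫ := mul_nonneg hγ0.le hm
    have hn1sq : ‖z k - zb k‖ ^ 2 = γ ^ 2 * ‖F (z k)‖ ^ 2 := by rw [hn1]; ring
    simp only [hC, hg, hb]
    nlinarith [A, B, hinner, hsq, hgM, hn1sq]
  -- Step 3: summability
  have hsum_le : ∀ n, ∑ k ∈ Finset.range n, C * b k ≤ g 0 := by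
    intro n
    calc ∑ k ∈ Finset.range n, C * b k
        ≤ ∑ k ∈ Finset.range n, (g k - g (k + 1)) :=
          Finset.sum_le_sum fun k _ => hfejer k
      _ = g 0 - g n := Finset.sum_range_sub' g n
      _ ≤ g 0 := by have : (0:ℝ) ≤ g n := sq_nonneg _; linarith
  have hsumCb : Summable fun k => C * b k :=
    summable_of_sum_range_le (fun k => mul_nonneg hCpos.le (hnn k)) hsum_le
  have hsumb : Summable b := by
    have h := hsumCb.mul_left C⁻¹
    have heq : (fun k => C⁻¹ * (C * b k)) = b := by
      funext k; rw [inv_mul_cancel_left₀ hCpos.ne']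
    rwa [heq] at h
  exact olivier hnn hanti hsumb
end

section
/- Let z⋆ ∈ zer(F + ∂g), z⁰ ∈ H, δ = ‖z⁰ - z⋆‖ > 0, and define the restricted gap Gap(z) = sup over w ∈ dom ∂g with ‖w - z⋆‖ ≤ δ of (⟨F(w), z - w⟩ + g(z) - g(w)). Then for any z ∈ H, Gap(z) ≤ (δ + ‖z - z⋆‖) · inf_{ξ ∈ ∂g(z)} ‖F(z) + ξ‖. -/
open scoped RealInnerProductSpace

/-- `g` is proper: finite somewhere and never `⊥`. -/
def IsProperEF {H : Type*} (g : H → EReal) : Prop :=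
  (∃ x, g x ≠ ⊤) ∧ ∀ x, g x ≠ ⊥

/-- `g` is convex (extended-real-valued). -/
def IsConvexEF {H : Type*} [NormedAddCommGroup H] [InnerProductSpace ℝ H]
    (g : H → EReal) : Prop :=
  ∀ x y : H, ∀ a b : ℝ, 0 ≤ a → 0 ≤ b → a + b = 1 →
    g (a • x + b • y) ≤ (a : EReal) * g x + (b : EReal) * g y

/-- `ξ` is a subgradient of `g` at `z`, i.e. `ξ ∈ ∂g(z)`. -/
def InSubdiff {H : Type*} [NormedAddCommGroup H] [InnerProductSpace ℝ H]
    (g : H → EReal) (z ξ : H) : Prop :=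
  ∀ y : H, g z + ((⟪ξ, y - z⟫ : ℝ) : EReal) ≤ g y

/-- `p = prox_{γ g}(x)`, i.e. `p` minimizes `g(·) + (1/(2γ))‖x - ·‖²`. -/
def IsProx {H : Type*} [NormedAddCommGroup H] [InnerProductSpace ℝ H]
    (g : H → EReal) (γ : ℝ) (x p : H) : Prop :=
  ∀ y : H, g p + ((1 / (2 * γ) * ‖x - p‖ ^ 2 : ℝ) : EReal) ≤
    g y + ((1 / (2 * γ) * ‖x - y‖ ^ 2 : ℝ) : EReal)

theorem stmt9 {H : Type*} [NormedAddCommGroup H] [InnerProductSpace ℝ H] [CompleteSpace H]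
    (F : H → H)
    (hmono : ∀ x y : H, 0 ≤ ⟪F x - F y, x - y⟫)
    (g : H → EReal) (hproper : IsProperEF g) (hconv : IsConvexEF g)
    (hlsc : LowerSemicontinuous g)
    (zstar : H) (hzstar : InSubdiff g zstar (-F zstar))
    (z0 : H) (hδ : 0 < ‖z0 - zstar‖) :
    ∀ z ξ : H, InSubdiff g z ξ →
      ∀ w : H, (∃ η : H, InSubdiff g w η) → ‖w - zstar‖ ≤ ‖z0 - zstar‖ →
        ((⟪F w, z - w⟫ : ℝ) : EReal) + g z ≤
          g w + (((‖z0 - zstar‖ + ‖z - zstar‖) * ‖F z + ξ‖ : ℝ) : EReal) := by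
  intro z ξ hξ w _ hw
  set C : ℝ := (‖z0 - zstar‖ + ‖z - zstar‖) * ‖F z + ξ‖ with hC
  have hr : (⟪F w, z - w⟫ : ℝ) ≤ ⟪ξ, w - z⟫ + C := by
    have h1 : 0 ≤ ⟪F z - F w, z - w⟫ := hmono z w
    have h2 : (⟪F z + ξ, z - w⟫ : ℝ) ≤ ‖F z + ξ‖ * ‖z - w‖ := real_inner_le_norm _ _
    have h3 : ‖z - w‖ ≤ ‖z - zstar‖ + ‖w - zstar‖ := by
      have := norm_sub_le (z - zstar) (w - zstar)
      simpa using this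
    have h4 : (0:ℝ) ≤ ‖F z + ξ‖ := norm_nonneg _
    have e1 : (⟪F z - F w, z - w⟫ : ℝ) = ⟪F z, z - w⟫ - ⟪F w, z - w⟫ :=
      inner_sub_left _ _ _
    have e2 : (⟪F z + ξ, z - w⟫ : ℝ) = ⟪F z, z - w⟫ + ⟪ξ, z - w⟫ :=
      inner_add_left _ _ _
    have e3 : (⟪ξ, w - z⟫ : ℝ) = -⟪ξ, z - w⟫ := by
      rw [← inner_neg_right]; congr 1; abel
    nlinarith [mul_le_mul_of_nonneg_left h3 h4]
  calc ((⟪F w, z - w⟫ : ℝ) : EReal) + g z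
      ≤ ((⟪ξ, w - z⟫ + C : ℝ) : EReal) + g z := by
        exact add_le_add_left (EReal.coe_le_coe_iff.mpr hr) _
    _ = (g z + ((⟪ξ, w - z⟫ : ℝ) : EReal)) + ((C : ℝ) : EReal) := by
        rw [EReal.coe_add, add_comm _ (g z), ← add_assoc]
    _ ≤ g w + ((C : ℝ) : EReal) := add_le_add_left (hξ w) _
end

section
/- Let F : H → H be monotone, L-Lipschitz, and suppose there exists μ with 0 < μ ≤ L such that ‖F(x) - F(y)‖ ≥ μ‖x - y‖ for all x, y. Suppose a sequence (zᵏ) satisfies, for each k, the descent inequality ‖F(zᵏ⁺¹)‖² ≤ ‖F(zᵏ)‖² - σ(1 - γ²L²)‖F(zᵏ) - F(z̄ᵏ)‖² with z̄ᵏ = zᵏ - γF(zᵏ), where σ ∈ (0,1) and γ ∈ (0, 1/L). Then ‖F(zᵏ⁺¹)‖² ≤ (1 - σγ²μ²(1 - γ²L²))‖F(zᵏ)‖², and the contraction factor lies in (0,1). -/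
open scoped RealInnerProductSpace

theorem stmt15 {H : Type*} [NormedAddCommGroup H] [InnerProductSpace ℝ H] [CompleteSpace H]
    (F : H → H) (L μ γ σ : ℝ) (hL : 0 < L)
    (hmono : ∀ x y : H, 0 ≤ ⟪F x - F y, x - y⟫)
    (hlip : ∀ x y : H, ‖F x - F y‖ ≤ L * ‖x - y‖)
    (hμ0 : 0 < μ) (hμL : μ ≤ L)
    (hlow : ∀ x y : H, μ * ‖x - y‖ ≤ ‖F x - F y‖)
    (hγ0 : 0 < γ) (hγ1 : γ < 1 / L) (hσ0 : 0 < σ) (hσ1 : σ < 1)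
    (z zb : ℕ → H)
    (hzb : ∀ k, zb k = z k - γ • F (z k))
    (hdescent : ∀ k, ‖F (z (k + 1))‖ ^ 2 ≤
      ‖F (z k)‖ ^ 2 - σ * (1 - γ ^ 2 * L ^ 2) * ‖F (z k) - F (zb k)‖ ^ 2) :
    (0 < 1 - σ * γ ^ 2 * μ ^ 2 * (1 - γ ^ 2 * L ^ 2)) ∧
      (1 - σ * γ ^ 2 * μ ^ 2 * (1 - γ ^ 2 * L ^ 2) < 1) ∧
      ∀ k : ℕ, ‖F (z (k + 1))‖ ^ 2 ≤
        (1 - σ * γ ^ 2 * μ ^ 2 * (1 - γ ^ 2 * L ^ 2)) * ‖F (z k)‖ ^ 2 := by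
  have hγL : γ * L < 1 := by
    have := (lt_div_iff₀ hL).mp hγ1
    linarith
  have hγL0 : 0 < γ * L := mul_pos hγ0 hL
  have h1 : 0 < 1 - γ ^ 2 * L ^ 2 := by nlinarith [mul_pos (sub_pos.mpr hγL) (by linarith : (0:ℝ) < 1 + γ * L)]
  have hγμ : γ * μ ≤ γ * L := by nlinarith
  have hpos : 0 < σ * γ ^ 2 * μ ^ 2 * (1 - γ ^ 2 * L ^ 2) := by positivity
  have hγμ1 : γ ^ 2 * μ ^ 2 < 1 := by nlinarith [mul_pos hγ0 hμ0]
  have hσf : σ * (1 - γ ^ 2 * L ^ 2) < 1 := by nlinarith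
  have hlt1 : σ * γ ^ 2 * μ ^ 2 * (1 - γ ^ 2 * L ^ 2) < 1 := by
    nlinarith [mul_pos (mul_pos hγ0 hγ0) (mul_pos hμ0 hμ0), mul_pos hσ0 h1]
  refine ⟨by linarith, by linarith, fun k => ?_⟩
  have hkey : γ * μ * ‖F (z k)‖ ≤ ‖F (z k) - F (zb k)‖ := by
    have := hlow (z k) (zb k)
    rw [hzb k] at this ⊢
    have h2 : z k - (z k - γ • F (z k)) = γ • F (z k) := by abel
    rw [h2, norm_smul, Real.norm_eq_abs, abs_of_pos hγ0] at this
    linarith [this]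
  have hsq : (γ * μ) ^ 2 * ‖F (z k)‖ ^ 2 ≤ ‖F (z k) - F (zb k)‖ ^ 2 := by
    have hnn : 0 ≤ γ * μ * ‖F (z k)‖ := by positivity
    nlinarith [norm_nonneg (F (z k) - F (zb k))]
  have hd := hdescent k
  have hσ1' : 0 ≤ σ * (1 - γ ^ 2 * L ^ 2) := by positivity
  nlinarith [hd, mul_le_mul_of_nonneg_left hsq hσ1']
end

section
/- Let F : H → H be monotone, continuously Fréchet differentiable, with DF(z⋆) left invertible at a zero z⋆ of F. Suppose (zᵏ) → z⋆ strongly and dᵏ solves (rₖ I + DF(zᵏ)) dᵏ = -F(zᵏ) for some rₖ > 0. Then there exist constants c > 0 and K ∈ ℕ such that ‖dᵏ‖ ≤ (1/c)‖F(zᵏ)‖ for all k ≥ K. -/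
open scoped RealInnerProductSpace

/-- The derivative of a monotone map is positive semidefinite. -/
lemma inner_fderiv_nonneg_aux {H : Type*} [NormedAddCommGroup H] [InnerProductSpace ℝ H]
    (F : H → H)
    (hmono : ∀ x y : H, 0 ≤ ⟪F x - F y, x - y⟫)
    (hdiff : ContDiff ℝ 1 F) (x v : H) :
    0 ≤ ⟪fderiv ℝ F x (v), v⟫ := by
  have hF : HasFDerivAt F (fderiv ℝ F x) x :=
    (hdiff.differentiable one_ne_zero x).hasFDerivAt
  have hline : HasDerivAt (fun t : ℝ => x + t • v) v 0 := by
    simpa using ((hasDerivAt_id (0 : ℝ)).smul_const v).const_add x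
  have hF' : HasFDerivAt F (fderiv ℝ F x) (x + (0 : ℝ) • v) := by simpa using hF
  have hcomp : HasDerivAt (fun t : ℝ => F (x + t • v)) (fderiv ℝ F x v) 0 :=
    hF'.comp_hasDerivAt 0 hline
  have hslope := hasDerivAt_iff_tendsto_slope.mp hcomp
  have hslope' : Filter.Tendsto (slope (fun t : ℝ => F (x + t • v)) 0)
      (nhdsWithin 0 (Set.Ioi 0)) (nhds (fderiv ℝ F x v)) :=
    hslope.mono_left (nhdsWithin_mono _ (fun t ht => ne_of_gt ht))
  have htend : Filter.Tendsto
      (fun t : ℝ => ⟪slope (fun t : ℝ => F (x + t • v)) 0 t, v⟫)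
      (nhdsWithin 0 (Set.Ioi 0)) (nhds ⟪fderiv ℝ F x v, v⟫) :=
    hslope'.inner (tendsto_const_nhds (x := v))
  refine ge_of_tendsto htend ?_
  filter_upwards [self_mem_nhdsWithin] with t ht
  have ht' : (0 : ℝ) < t := ht
  have hm := hmono (x + t • v) x
  have heq : (x + t • v) - x = t • v := by abel
  rw [heq, real_inner_smul_right] at hm
  have hinner : 0 ≤ ⟪F (x + t • v) - F x, v⟫ := nonneg_of_mul_nonneg_right hm ht'
  have : slope (fun t : ℝ => F (x + t • v)) 0 t = t⁻¹ • (F (x + t • v) - F x) := by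
    simp [slope_def_field, slope, vsub_eq_sub]
  rw [this, real_inner_smul_left]
  positivity

theorem stmt18 {H : Type*} [NormedAddCommGroup H] [InnerProductSpace ℝ H] [CompleteSpace H]
    (F : H → H)
    (hmono : ∀ x y : H, 0 ≤ ⟪F x - F y, x - y⟫)
    (hdiff : ContDiff ℝ 1 F)
    (zstar : H) (hzstar : F zstar = 0)
    (c₁ : ℝ) (hc₁ : 0 < c₁)
    (hleft : ∀ v : H, c₁ * ‖v‖ ≤ ‖fderiv ℝ F zstar v‖)
    (z : ℕ → H) (hconv : Filter.Tendsto z Filter.atTop (nhds zstar))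
    (r : ℕ → ℝ) (hr : ∀ k, 0 < r k)
    (d : ℕ → H)
    (hd : ∀ k, r k • d k + fderiv ℝ F (z k) (d k) = -F (z k)) :
    ∃ c : ℝ, 0 < c ∧ ∃ K : ℕ, ∀ k ≥ K, ‖d k‖ ≤ (1 / c) * ‖F (z k)‖ := by
  have hc : (0 : ℝ) < c₁ / 2 := by linarith
  refine ⟨c₁ / 2, hc, ?_⟩
  -- continuity of the derivative
  have hcontD : Continuous (fderiv ℝ F) := hdiff.continuous_fderiv one_ne_zero
  have htendD : Filter.Tendsto (fun k => fderiv ℝ F (z k)) Filter.atTop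
      (nhds (fderiv ℝ F zstar)) := (hcontD.tendsto _).comp hconv
  have hnorm : Filter.Tendsto (fun k => ‖fderiv ℝ F (z k) - fderiv ℝ F zstar‖)
      Filter.atTop (nhds 0) := by
    have := (htendD.sub (tendsto_const_nhds (x := fderiv ℝ F zstar))).norm
    simpa using this
  have hev : ∀ᶠ k in Filter.atTop, ‖fderiv ℝ F (z k) - fderiv ℝ F zstar‖ < c₁ / 2 := by
    have := hnorm.eventually (eventually_lt_nhds hc)
    simpa using this
  obtain ⟨K, hK⟩ := hev.exists_forall_of_atTop
  refine ⟨K, fun k hk => ?_⟩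
  set A := fderiv ℝ F (z k) with hA
  -- lower bound on ‖A (d k)‖
  have hpert : ‖(A - fderiv ℝ F zstar) (d k)‖ ≤ (c₁ / 2) * ‖d k‖ := by
    calc ‖(A - fderiv ℝ F zstar) (d k)‖ ≤ ‖A - fderiv ℝ F zstar‖ * ‖d k‖ :=
          (A - fderiv ℝ F zstar).le_opNorm (d k)
      _ ≤ (c₁ / 2) * ‖d k‖ :=
          mul_le_mul_of_nonneg_right (hK k hk).le (norm_nonneg _)
  have hAd : (c₁ / 2) * ‖d k‖ ≤ ‖A (d k)‖ := by
    have htri : ‖fderiv ℝ F zstar (d k)‖ ≤ ‖A (d k)‖ + ‖(A - fderiv ℝ F zstar) (d k)‖ := by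
      have : fderiv ℝ F zstar (d k) = A (d k) - (A - fderiv ℝ F zstar) (d k) := by
        simp
      rw [this]
      exact norm_sub_le _ _
    have hl := hleft (d k)
    linarith
  -- ‖F (z k)‖² ≥ ‖A (d k)‖²
  have hsq : ‖A (d k)‖ ^ 2 ≤ ‖F (z k)‖ ^ 2 := by
    have hFeq : ‖F (z k)‖ = ‖r k • d k + A (d k)‖ := by
      rw [hd k]; simp
    have hip : 0 ≤ ⟪r k • d k, A (d k)⟫ := by
      rw [real_inner_smul_left, real_inner_comm]
      exact mul_nonneg (hr k).le (inner_fderiv_nonneg_aux F hmono hdiff (z k) (d k))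
    have hexp : ‖r k • d k + A (d k)‖ ^ 2
        = ‖r k • d k‖ ^ 2 + 2 * ⟪r k • d k, A (d k)⟫ + ‖A (d k)‖ ^ 2 := by
      have := norm_add_sq_real (r k • d k) (A (d k))
      linarith
    rw [hFeq, hexp]
    nlinarith [sq_nonneg ‖r k • d k‖]
  have hF0 : (0 : ℝ) ≤ ‖F (z k)‖ := norm_nonneg _
  have hd0 : (0 : ℝ) ≤ ‖d k‖ := norm_nonneg _
  have hkey : (c₁ / 2) * ‖d k‖ ≤ ‖F (z k)‖ := by
    nlinarith [norm_nonneg (A (d k))]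
  rw [one_div_mul_eq_div, le_div_iff₀ hc]
  linarith
end

section
/- Let (cₖ) be a sequence of positive reals with cₖ → 0 and κ > 0, and suppose ‖zᵏ⁺¹ - zᵏ‖ ≤ κ ∏_{i=1}^{k} cᵢ for all k. If (zᵏ) converges to z⋆, then the sequence μₖ = κ Σ_{ℓ=k}^{∞} ∏_{i=1}^{ℓ} cᵢ satisfies ‖zᵏ - z⋆‖ ≤ μₖ and μₖ/μₖ₋₁ → 0, i.e., (zᵏ) converges to z⋆ R-superlinearly. -/
open scoped RealInnerProductSpace

theorem stmt19 {H : Type*} [NormedAddCommGroup H] [InnerProductSpace ℝ H] [CompleteSpace H]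
    (c : ℕ → ℝ) (hc : ∀ k, 0 < c k)
    (hc0 : Filter.Tendsto c Filter.atTop (nhds 0))
    (κ : ℝ) (hκ : 0 < κ)
    (hsum : Summable fun ℓ : ℕ => ∏ i ∈ Finset.Icc 1 ℓ, c i)
    (z : ℕ → H) (zstar : H)
    (hconv : Filter.Tendsto z Filter.atTop (nhds zstar))
    (hstep : ∀ k : ℕ, ‖z (k + 1) - z k‖ ≤ κ * ∏ i ∈ Finset.Icc 1 k, c i)
    (μ : ℕ → ℝ)
    (hμ : ∀ k : ℕ, μ k = κ * ∑' j : ℕ, ∏ i ∈ Finset.Icc 1 (k + j), c i) :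
    (∀ k : ℕ, ‖z k - zstar‖ ≤ μ k) ∧
      Filter.Tendsto (fun k : ℕ => μ (k + 1) / μ k) Filter.atTop (nhds 0) := by
  set P : ℕ → ℝ := fun ℓ => ∏ i ∈ Finset.Icc 1 ℓ, c i with hP
  have hPpos : ∀ ℓ, 0 < P ℓ := fun ℓ => Finset.prod_pos (fun i _ => hc i)
  have hsumk : ∀ k : ℕ, Summable fun j : ℕ => P (k + j) := by
    intro k
    have := (summable_nat_add_iff k).mpr hsum
    simpa [add_comm] using this
  have hTpos : ∀ k, 0 < ∑' j : ℕ, P (k + j) := by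
    intro k
    exact Summable.tsum_pos (hsumk k) (fun j => (hPpos _).le) 0 (hPpos _)
  constructor
  · intro k
    set f : ℕ → H := fun j => z (k + j + 1) - z (k + j) with hf
    have hfb : ∀ j, ‖f j‖ ≤ κ * P (k + j) := fun j => hstep (k + j)
    have hfs : Summable f :=
      Summable.of_norm_bounded ((hsumk k).mul_left κ) hfb
    have hfns : Summable fun j => ‖f j‖ :=
      Summable.of_nonneg_of_le (fun _ => norm_nonneg _) hfb ((hsumk k).mul_left κ)
    have hpart : ∀ n : ℕ, ∑ j ∈ Finset.range n, f j = z (k + n) - z k := by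
      intro n
      calc ∑ j ∈ Finset.range n, f j
          = ∑ j ∈ Finset.range n, (z (k + (j + 1)) - z (k + j)) := by
            refine Finset.sum_congr rfl fun j _ => ?_
            simp [hf, add_assoc]
        _ = z (k + n) - z k := Finset.sum_range_sub (fun j => z (k + j)) n
    have htend : Filter.Tendsto (fun n => ∑ j ∈ Finset.range n, f j)
        Filter.atTop (nhds (zstar - z k)) := by
      simp only [hpart]
      have := (hconv.comp (Filter.tendsto_add_atTop_nat k)).sub_const (z k)
      simpa [Function.comp, add_comm] using this
    have hhas : HasSum f (zstar - z k) :=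
      (hfs.hasSum_iff_tendsto_nat).mpr htend
    have h1 : ‖z k - zstar‖ = ‖∑' j, f j‖ := by
      rw [hhas.tsum_eq, norm_sub_rev]
    rw [h1, hμ k]
    calc ‖∑' j, f j‖ ≤ ∑' j, ‖f j‖ := norm_tsum_le_tsum_norm hfns
      _ ≤ ∑' j, κ * P (k + j) := Summable.tsum_le_tsum hfb hfns ((hsumk k).mul_left κ)
      _ = κ * ∑' j, P (k + j) := tsum_mul_left
  · rw [Metric.tendsto_atTop]
    intro ε hε
    obtain ⟨N, hN⟩ := (Metric.tendsto_atTop.mp hc0) (ε / 2) (by linarith)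
    refine ⟨N, fun k hk => ?_⟩
    have hratio : μ (k + 1) / μ k ≤ ε / 2 := by
      have hstep2 : ∀ j : ℕ, P (k + 1 + j) ≤ (ε / 2) * P (k + j) := by
        intro j
        have h1 : P (k + 1 + j) = P (k + j) * c (k + j + 1) := by
          have : k + 1 + j = (k + j) + 1 := by ring
          rw [this]
          show (∏ i ∈ Finset.Icc 1 (k + j + 1), c i) = (∏ i ∈ Finset.Icc 1 (k + j), c i) * c (k + j + 1)
          rw [Finset.prod_Icc_succ_top (by omega : 1 ≤ k + j + 1)]
        have hc2 : c (k + j + 1) ≤ ε / 2 := by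
          have := hN (k + j + 1) (by omega)
          rw [Real.dist_eq, sub_zero] at this
          exact le_of_lt (lt_of_abs_lt this)
        rw [h1]
        calc P (k + j) * c (k + j + 1) ≤ P (k + j) * (ε / 2) :=
              mul_le_mul_of_nonneg_left hc2 (hPpos _).le
          _ = (ε / 2) * P (k + j) := mul_comm _ _
      have hT : (∑' j : ℕ, P (k + 1 + j)) ≤ (ε / 2) * ∑' j : ℕ, P (k + j) := by
        calc (∑' j : ℕ, P (k + 1 + j)) ≤ ∑' j : ℕ, (ε / 2) * P (k + j) :=
              Summable.tsum_le_tsum hstep2 (hsumk (k + 1)) ((hsumk k).mul_left _)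
          _ = (ε / 2) * ∑' j : ℕ, P (k + j) := tsum_mul_left
      rw [hμ, hμ, mul_div_mul_left _ _ (ne_of_gt hκ)]
      rw [div_le_iff₀ (hTpos k)]
      exact hT
    have hnn : 0 ≤ μ (k + 1) / μ k := by
      apply div_nonneg
      · rw [hμ]; exact mul_nonneg hκ.le (hTpos _).le
      · rw [hμ]; exact mul_nonneg hκ.le (hTpos _).le
    rw [Real.dist_eq, sub_zero, abs_of_nonneg hnn]
    linarith
end
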